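/- In the construction where H consists of 5n/d blocks (d = 0.1·log₃ n), with block B_i = (v_{1, i mod N_1}, ..., v_{d, i mod N_d}) where N_k = n^{0.1}·3^{k−1}, and G contains all edges between V_1 and ∪_{k≥2} V_k: every substring S of H satisfies rank(S)/len(S) = O(1/log n). -/

import Mathlib

open scoped Classical

/-- `IsArc H a b (i, j)`: the pair `(i, j)` is an arc of the sequence `H` restricted to
positions `[a : b]`: `a ≤ i < j ≤ b`, `H i = H j`, and no index strictly between `i`
and `j` carries the same value (two consecutive occurrences of the same node). -/
def IsArc {V : Type*} (H : ℕ → V) (a b : ℕ) (α : ℕ × ℕ) : Prop :=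
  a ≤ α.1 ∧ α.1 < α.2 ∧ α.2 ≤ b ∧ H α.1 = H α.2 ∧
    ∀ l, α.1 < l → l < α.2 → H l ≠ H α.1

/-- The configuration reached from the initial configuration `γ` after performing the
moves of `H` at positions `a, a+1, ..., i` (each move flips the sign of the moved node). -/
noncomputable def conf {V : Type*} (γ : V → ℝ) (H : ℕ → V) (a i : ℕ) (v : V) : ℝ :=
  γ v * (-1 : ℝ) ^ ((Finset.Icc a i).filter fun l => H l = v).card

/-- `v` appears an odd number of times strictly between positions `i` and `j` of `H`. -/
def oddIn {V : Type*} (H : ℕ → V) (i j : ℕ) (v : V) : Prop :=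
  Odd ((Finset.Ioo i j).filter fun l => H l = v).card

/-- The improvement vector of the arc `α` of the sequence `H` (with moves starting at
position `a`), with respect to the adjacency relation `Adj` of the graph and the initial
configuration `γ`. It is indexed (symmetrically) by ordered pairs of nodes; its entry at
an edge `(u, v)` with `u = node(α)` is nonzero iff `u` and `v` are adjacent and `v`
appears an odd number of times strictly inside `α`, in which case it equals
`2 γ_{i−1}(u) γ_{i−1}(v)`, where `γ_{i−1}` is the configuration just before the first
move of `α`. -/
noncomputable def impVec {V : Type*} (Adj : V → V → Prop) (γ : V → ℝ) (H : ℕ → V)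
    (a : ℕ) (α : ℕ × ℕ) : V × V → ℝ :=
  fun p =>
    if (p.1 = H α.1 ∧ Adj p.1 p.2 ∧ oddIn H α.1 α.2 p.2) ∨
        (p.2 = H α.1 ∧ Adj p.1 p.2 ∧ oddIn H α.1 α.2 p.1) then
      2 * conf γ H a (α.1 - 1) p.1 * conf γ H a (α.1 - 1) p.2
    else 0

/-! The hard construction (Appendix B). Here `d = 0.1·log₃ n`, i.e. `n = 3^(10d)`.
Nodes are pairs `v_{k,j} = (k, j)` with `1 ≤ k ≤ d` and `j < N_k = n^0.1 · 3^(k−1)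
= 3^(d+k−1)`. The graph contains all edges between `V_1` and `∪_{k≥2} V_k`. The
sequence `H` is the concatenation of `5n/d` blocks, where the `i`-th block is
`(v_{1, i mod N_1}, ..., v_{d, i mod N_d})`. -/

/-- `N_k = n^0.1 · 3^(k−1) = 3^(d+k−1)`, the size of `V_k`. -/
def Nsize (d k : ℕ) : ℕ := 3 ^ (d + k - 1)

/-- The node `(k, j)` is a legitimate node of the construction: `1 ≤ k ≤ d`, `j < N_k`. -/
def validNode (d : ℕ) (p : ℕ × ℕ) : Prop :=
  1 ≤ p.1 ∧ p.1 ≤ d ∧ p.2 < Nsize d p.1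

/-- Adjacency of the constructed graph: all edges between `V_1` and `∪_{k=2}^d V_k`. -/
def Adj9 (d : ℕ) (p q : ℕ × ℕ) : Prop :=
  validNode d p ∧ validNode d q ∧ ((p.1 = 1 ∧ 2 ≤ q.1) ∨ (q.1 = 1 ∧ 2 ≤ p.1))

/-- The constructed sequence `H` (1-indexed): position `idx` lies in block
`i = ⌈idx/d⌉` at offset `k = idx − (i−1)d`, and carries the node `v_{k, i mod N_k}`. -/
def H9 (d : ℕ) (idx : ℕ) : ℕ × ℕ :=
  ((idx - 1) % d + 1, ((idx - 1) / d + 1) % Nsize d ((idx - 1) % d + 1))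

/-- The number of blocks, `5n/d` with `n = 3^(10d)`. -/
def numBlocks (d : ℕ) : ℕ := 5 * 3 ^ (10 * d) / d

/-- `rank(S)` for the substring `S = H[a : b]`: the rank of the matrix whose columns are
the improvement vectors (w.r.t. the constructed graph) of all arcs of `S`. -/
noncomputable def subRank (d a b : ℕ) : ℕ :=
  Module.finrank ℝ (Submodule.span ℝ
    (impVec (Adj9 d) (fun _ => 1) (H9 d) a '' {α : ℕ × ℕ | IsArc (H9 d) a b α}))


section AuxLemmas

open Finset

/-- Exactly one element of a half-open window of length `M` has a given residue `r < M`. -/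
lemma window_one {M r : ℕ} (hr : r < M) (t : ℕ) :
    ((Finset.Ico t (t + M)).filter (fun l => l % M = r)).card = 1 := by
  have hM : 0 < M := by omega
  obtain ⟨l₀, hmem, hmod⟩ : ∃ l₀, (t ≤ l₀ ∧ l₀ < t + M) ∧ l₀ % M = r := by
    have ht := Nat.div_add_mod t M
    have htm := Nat.mod_lt t hM
    rcases le_or_gt (t % M) r with h | h
    · refine ⟨t + (r - t % M), ⟨Nat.le_add_right _ _, by omega⟩, ?_⟩
      have he : t + (r - t % M) = M * (t / M) + r := by omega
      rw [he, Nat.mul_add_mod, Nat.mod_eq_of_lt hr]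
    · refine ⟨t + (M - t % M + r), ⟨Nat.le_add_right _ _, by omega⟩, ?_⟩
      have h2 : M * (t / M + 1) = M * (t / M) + M := by ring
      have he : t + (M - t % M + r) = M * (t / M + 1) + r := by omega
      rw [he, Nat.mul_add_mod, Nat.mod_eq_of_lt hr]
  rw [Finset.card_eq_one]
  refine ⟨l₀, ?_⟩
  rw [Finset.eq_singleton_iff_unique_mem]
  constructor
  · rw [Finset.mem_filter, Finset.mem_Ico]; exact ⟨hmem, hmod⟩
  · intro x hx
    rw [Finset.mem_filter, Finset.mem_Ico] at hx
    have hmm : x % M = l₀ % M := by rw [hx.2, hmod]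
    rcases le_total x l₀ with h | h
    · have hdvd := (Nat.modEq_iff_dvd' h).mp hmm
      have h0 : l₀ - x = 0 := Nat.eq_zero_of_dvd_of_lt hdvd (by omega)
      omega
    · have hdvd := (Nat.modEq_iff_dvd' h).mp hmm.symm
      have h0 : x - l₀ = 0 := Nat.eq_zero_of_dvd_of_lt hdvd (by omega)
      omega

/-- Counting a residue class in a half-open interval whose length is a multiple of `M`. -/
lemma window_card {M r : ℕ} (hr : r < M) : ∀ (n t : ℕ),
    ((Finset.Ico t (t + n * M)).filter (fun l => l % M = r)).card = n := by
  intro n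
  induction n with
  | zero => intro t; simp
  | succ n ih =>
    intro t
    have hE : t + (n + 1) * M = (t + n * M) + M := by ring
    rw [hE, ← Finset.Ico_union_Ico_eq_Ico (Nat.le_add_right t (n * M)) (Nat.le_add_right _ M),
      Finset.filter_union,
      Finset.card_union_of_disjoint
        (Finset.disjoint_filter_filter (Finset.Ico_disjoint_Ico_consecutive t (t + n * M) _)),
      ih t, window_one hr (t + n * M)]

/-- Counting a residue class in a closed interval: at most `(t-s)/M + 1` elements. -/
lemma count_le {M r : ℕ} (hr : r < M) (s t : ℕ) :
    ((Finset.Icc s t).filter (fun l => l % M = r)).card ≤ (t - s) / M + 1 := by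
  have hM : 0 < M := by omega
  have hsub : Finset.Icc s t ⊆ Finset.Ico s (s + ((t - s) / M + 1) * M) := by
    intro x hx
    rw [Finset.mem_Icc] at hx
    rw [Finset.mem_Ico]
    have h1 := Nat.div_add_mod (t - s) M
    have h2 := Nat.mod_lt (t - s) hM
    have h3 : ((t - s) / M + 1) * M = M * ((t - s) / M) + M := by ring
    omega
  calc ((Finset.Icc s t).filter (fun l => l % M = r)).card
      ≤ ((Finset.Ico s (s + ((t - s) / M + 1) * M)).filter (fun l => l % M = r)).card :=
        Finset.card_le_card (Finset.filter_subset_filter _ hsub)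
    _ = (t - s) / M + 1 := window_card hr _ _

lemma Nsize_pos (d k : ℕ) : 0 < Nsize d k := Nat.pow_pos (by norm_num)

lemma Nsize_split {d k : ℕ} (hk : 1 ≤ k) : Nsize d k = 3 ^ (k - 1) * Nsize d 1 := by
  unfold Nsize
  rw [← pow_add]
  congr 1
  omega

lemma validNode_H9 {d : ℕ} (hd : 1 ≤ d) (l : ℕ) : validNode d (H9 d l) := by
  have h1 := Nat.mod_lt (l - 1) (show 0 < d by omega)
  refine ⟨?_, ?_, ?_⟩
  · show 1 ≤ (l - 1) % d + 1
    omega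
  · show (l - 1) % d + 1 ≤ d
    omega
  · exact Nat.mod_lt _ (Nsize_pos d _)

/-- Positions carrying equal nodes are exactly a residue class modulo `N_k · d`. -/
lemma H9_eq_iff {d : ℕ} (hd : 1 ≤ d) {l l' : ℕ} (hl : 1 ≤ l) (hl' : 1 ≤ l') :
    H9 d l' = H9 d l ↔
      l' % (Nsize d ((l - 1) % d + 1) * d) = l % (Nsize d ((l - 1) % d + 1) * d) := by
  have hd0 : 0 < d := hd
  set N := Nsize d ((l - 1) % d + 1) with hN
  have hN0 : 0 < N := Nsize_pos d _
  have key : ∀ x : ℕ, x % (d * N) = d * (x / d % N) + x % d := by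
    intro x
    rw [← Nat.mod_mul_right_div_self, ← Nat.mod_mul_right_mod x d N]
    exact (Nat.div_add_mod _ _).symm
  constructor
  · intro h
    have h1 : (l' - 1) % d + 1 = (l - 1) % d + 1 := congrArg Prod.fst h
    have h1' : (l' - 1) % d = (l - 1) % d := by omega
    have h2 : ((l' - 1) / d + 1) % Nsize d ((l' - 1) % d + 1)
        = ((l - 1) / d + 1) % Nsize d ((l - 1) % d + 1) := congrArg Prod.snd h
    rw [h1'] at h2
    rw [← hN] at h2
    have h3 : (l' - 1) / d % N = (l - 1) / d % N := Nat.ModEq.add_right_cancel' 1 h2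
    have hx : (l' - 1) % (d * N) = (l - 1) % (d * N) := by
      rw [key, key, h3, h1']
    have h4 : (l' - 1) + 1 ≡ (l - 1) + 1 [MOD d * N] := Nat.ModEq.add_right 1 hx
    rw [Nat.sub_add_cancel hl', Nat.sub_add_cancel hl] at h4
    rw [mul_comm N d]
    exact h4
  · intro h
    rw [mul_comm N d] at h
    have h5 : (l' - 1) + 1 ≡ (l - 1) + 1 [MOD d * N] := by
      rw [Nat.sub_add_cancel hl', Nat.sub_add_cancel hl]
      exact h
    have hx : (l' - 1) % (d * N) = (l - 1) % (d * N) := Nat.ModEq.add_right_cancel' 1 h5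
    rw [key, key] at hx
    have hr1 : (l' - 1) % d < d := Nat.mod_lt _ hd0
    have hr2 : (l - 1) % d < d := Nat.mod_lt _ hd0
    have e1 : (l' - 1) % d = (l - 1) % d := by
      have t1 : (d * ((l' - 1) / d % N) + (l' - 1) % d) % d = (l' - 1) % d := by
        rw [Nat.mul_add_mod, Nat.mod_eq_of_lt hr1]
      have t2 : (d * ((l - 1) / d % N) + (l - 1) % d) % d = (l - 1) % d := by
        rw [Nat.mul_add_mod, Nat.mod_eq_of_lt hr2]
      rw [← t1, ← t2, hx]
    have e2 : (l' - 1) / d % N = (l - 1) / d % N := by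
      have hmul : d * ((l' - 1) / d % N) = d * ((l - 1) / d % N) := by omega
      exact Nat.eq_of_mul_eq_mul_left hd0 hmul
    show H9 d l' = H9 d l
    unfold H9
    rw [e1]
    rw [← hN]
    have e3 : ((l' - 1) / d + 1) % N = ((l - 1) / d + 1) % N := Nat.ModEq.add_right 1 e2
    rw [e3]

/-- Every arc of `H9` starting at layer `k` has length exactly `N_k · d`. -/
lemma arc_eq {d a b : ℕ} (hd : 1 ≤ d) (ha : 1 ≤ a) {i j : ℕ}
    (h : IsArc (H9 d) a b (i, j)) : j = i + Nsize d ((i - 1) % d + 1) * d := by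
  obtain ⟨hai, hij, hjb, heq, hmin⟩ := h
  have hai' : a ≤ i := hai
  have hij' : i < j := hij
  set M := Nsize d ((i - 1) % d + 1) * d with hM
  have hi1 : 1 ≤ i := le_trans ha hai'
  have hj1 : 1 ≤ j := by omega
  have hM0 : 0 < M := Nat.mul_pos (Nsize_pos _ _) (by omega)
  have heq' : H9 d i = H9 d j := heq
  have hmodeq : j % M = i % M := (H9_eq_iff hd hi1 hj1).mp heq'.symm
  have hdvd : M ∣ j - i := (Nat.modEq_iff_dvd' (le_of_lt hij')).mp hmodeq.symm
  have hge : M ≤ j - i := Nat.le_of_dvd (by omega) hdvd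
  by_contra hne
  have hlt : i + M < j := by
    rcases hdvd with ⟨c, hc⟩
    have : 2 ≤ c := by
      rcases c with _ | _ | c
      · omega
      · omega
      · omega
    have : 2 * M ≤ j - i := by
      calc 2 * M ≤ M * c := by
            rw [mul_comm 2 M]
            exact Nat.mul_le_mul_left _ this
        _ = j - i := hc.symm
    omega
  have hsame : H9 d (i + M) = H9 d i := by
    rw [H9_eq_iff hd hi1 (by omega)]
    exact Nat.add_mod_right i M
  exact hmin (i + M) (by omega) hlt hsame

/-- Every valid node occupies exactly one residue class modulo `N_{v₁} · d`. -/
lemma occ_residue {d : ℕ} (hd : 1 ≤ d) {v : ℕ × ℕ} (hv : validNode d v) :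
    ∃ r < Nsize d v.1 * d, ∀ l, 1 ≤ l → (H9 d l = v ↔ l % (Nsize d v.1 * d) = r) := by
  obtain ⟨hv1, hvd, hv2⟩ := hv
  have hd0 : 0 < d := hd
  set N := Nsize d v.1 with hN
  have hN0 : 0 < N := Nsize_pos _ _
  set b' := (v.2 + N - 1) % N + 1 with hb'
  set l₀ := (b' - 1) * d + v.1 with hl₀
  have hl₀1 : 1 ≤ l₀ := by omega
  have hsub : l₀ - 1 = (v.1 - 1) + (b' - 1) * d := by omega
  have hmod : (l₀ - 1) % d = v.1 - 1 := by
    rw [hsub, Nat.add_mul_mod_self_right, Nat.mod_eq_of_lt (by omega)]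
  have hdiv : (l₀ - 1) / d = b' - 1 := by
    rw [hsub, Nat.add_mul_div_right _ _ hd0, Nat.div_eq_of_lt (by omega), Nat.zero_add]
  have hb'mod : b' % N = v.2 := by
    rcases Nat.eq_zero_or_pos v.2 with h0 | hpos
    · have h1 : v.2 + N - 1 = N - 1 := by omega
      have h2 : (N - 1) % N = N - 1 := Nat.mod_eq_of_lt (by omega)
      rw [hb', h1, h2, show N - 1 + 1 = N from by omega, Nat.mod_self, h0]
    · have h1 : v.2 + N - 1 = (v.2 - 1) + N := by omega
      have hin : (v.2 - 1) % N = v.2 - 1 := Nat.mod_eq_of_lt (by omega)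
      rw [hb', h1, Nat.add_mod_right, hin,
        show v.2 - 1 + 1 = v.2 from by omega, Nat.mod_eq_of_lt hv2]
  have hfst : (l₀ - 1) % d + 1 = v.1 := by rw [hmod]; omega
  have hH : H9 d l₀ = v := by
    show ((l₀ - 1) % d + 1, ((l₀ - 1) / d + 1) % Nsize d ((l₀ - 1) % d + 1)) = v
    rw [hfst, hdiv, ← hN, show b' - 1 + 1 = b' from by omega, hb'mod]
  refine ⟨l₀ % (N * d), Nat.mod_lt _ (Nat.mul_pos hN0 hd0), fun l hl => ?_⟩
  constructor
  · intro h
    have h2 := (H9_eq_iff hd hl₀1 hl).mp (h.trans hH.symm)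
    rwa [hfst, ← hN] at h2
  · intro h
    have h2 : H9 d l = H9 d l₀ := by
      rw [H9_eq_iff hd hl₀1 hl, hfst, ← hN]
      exact h
    rw [h2, hH]

/-- Number of occurrences of a node in a half-open interval of suitable length. -/
lemma occ_count {d : ℕ} (hd : 1 ≤ d) {v : ℕ × ℕ} (hv : validNode d v)
    {s : ℕ} (hs : 1 ≤ s) (n : ℕ) :
    ((Finset.Ico s (s + n * (Nsize d v.1 * d))).filter (fun l => H9 d l = v)).card = n := by
  obtain ⟨r, hr, hiff⟩ := occ_residue hd hv
  have hcongr : (Finset.Ico s (s + n * (Nsize d v.1 * d))).filter (fun l => H9 d l = v)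
      = (Finset.Ico s (s + n * (Nsize d v.1 * d))).filter (fun l => l % (Nsize d v.1 * d) = r) := by
    apply Finset.filter_congr
    intro l hl
    rw [Finset.mem_Ico] at hl
    exact hiff l (by omega)
  rw [hcongr, window_card hr]

lemma occ_Ioo {d : ℕ} (hd : 1 ≤ d) {v : ℕ × ℕ} (hv : validNode d v)
    {i : ℕ} (hi : 1 ≤ i) (hne : ¬ (H9 d i = v)) (n : ℕ) :
    ((Finset.Ioo i (i + n * (Nsize d v.1 * d))).filter (fun l => H9 d l = v)).card = n := by
  rcases Nat.eq_zero_or_pos n with h0 | hpos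
  · subst h0; simp
  · have hlt : i < i + n * (Nsize d v.1 * d) := by
      have := Nat.mul_pos hpos (Nat.mul_pos (Nsize_pos d v.1) (show 0 < d from hd))
      omega
    have hcount := occ_count hd hv hi n (s := i)
    rw [← Finset.Ioo_insert_left hlt, Finset.filter_insert, if_neg hne] at hcount
    exact hcount

lemma filter_classical_eq {α : Type*} (P : α → Prop) [DecidablePred P] (s : Finset α) :
    @Finset.filter α P (fun a => Classical.propDecidable _) s = s.filter P :=
  @Finset.filter_congr α P P (fun a => Classical.propDecidable _) _ s (fun _ _ => Iff.rfl)

lemma conf_eq {d : ℕ} (a i : ℕ) (v : ℕ × ℕ) :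
    conf (fun _ => (1:ℝ)) (H9 d) a i v
      = (-1 : ℝ) ^ ((Finset.Icc a i).filter (fun l => H9 d l = v)).card := by
  unfold conf
  rw [one_mul, filter_classical_eq]

lemma oddIn_iff {d : ℕ} (i j : ℕ) (v : ℕ × ℕ) :
    oddIn (H9 d) i j v ↔ Odd ((Finset.Ioo i j).filter (fun l => H9 d l = v)).card := by
  unfold oddIn
  rw [filter_classical_eq]

lemma conf_shift {d a i i' : ℕ} (ha : 1 ≤ a) (hai : a ≤ i) (hii' : i ≤ i') (v : ℕ × ℕ) :
    conf (fun _ => (1:ℝ)) (H9 d) a (i' - 1) v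
      = conf (fun _ => (1:ℝ)) (H9 d) a (i - 1) v *
        (-1 : ℝ) ^ ((Finset.Ico i i').filter (fun l => H9 d l = v)).card := by
  rw [conf_eq, conf_eq]
  have hi1 : 1 ≤ i := le_trans ha hai
  have h1 : Finset.Icc a (i - 1) = Finset.Ico a i := by
    rw [← Finset.Ico_add_one_right_eq_Icc]; congr 1; omega
  have h2 : Finset.Icc a (i' - 1) = Finset.Ico a i' := by
    rw [← Finset.Ico_add_one_right_eq_Icc]; congr 1; omega
  rw [h1, h2, ← Finset.Ico_union_Ico_eq_Ico hai hii', Finset.filter_union,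
    Finset.card_union_of_disjoint
      (Finset.disjoint_filter_filter (Finset.Ico_disjoint_Ico_consecutive a i i')),
    pow_add]


lemma arc_right_unique {V : Type*} {H : ℕ → V} {a b : ℕ} {α α' : ℕ × ℕ}
    (h : IsArc H a b α) (h' : IsArc H a b α') (he : α.2 = α'.2) : α = α' := by
  obtain ⟨h1, h2, h3, h4, h5⟩ := h
  obtain ⟨h1', h2', h3', h4', h5'⟩ := h'
  have hfst : α.1 = α'.1 := by
    rcases lt_trichotomy α.1 α'.1 with hlt | heq | hgt
    · exfalso
      refine h5 α'.1 hlt (by omega) ?_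
      calc H α'.1 = H α'.2 := h4'
        _ = H α.2 := by rw [he]
        _ = H α.1 := h4.symm
    · exact heq
    · exfalso
      refine h5' α.1 hgt (by omega) ?_
      calc H α.1 = H α.2 := h4
        _ = H α'.2 := by rw [he]
        _ = H α'.1 := h4'.symm
  exact Prod.ext hfst he

lemma card_image_le_of_eq {A B C : Type*} [DecidableEq B] [DecidableEq C]
    (s : Finset A) (f : A → B) (g : A → C)
    (h : ∀ x ∈ s, ∀ y ∈ s, g x = g y → f x = f y) :
    (s.image f).card ≤ (s.image g).card := by
  classical
  rcases s.eq_empty_or_nonempty with rfl | ⟨a₀, ha₀⟩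
  · simp
  set φ : C → B := fun c => if hc : ∃ x, x ∈ s ∧ g x = c then f hc.choose else f a₀ with hφ
  have hsub : s.image f ⊆ (s.image g).image φ := by
    intro y hy
    rw [Finset.mem_image] at hy
    obtain ⟨x, hx, rfl⟩ := hy
    rw [Finset.mem_image]
    refine ⟨g x, Finset.mem_image_of_mem g hx, ?_⟩
    have hex : ∃ z, z ∈ s ∧ g z = g x := ⟨x, hx, rfl⟩
    rw [hφ]
    simp only
    rw [dif_pos hex]
    exact h _ hex.choose_spec.1 _ hx hex.choose_spec.2
  exact le_trans (Finset.card_le_card hsub) Finset.card_image_le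

/-- Two arcs of `H9` within `[a,b]` with the same node of layer `≥ 2` have the same
improvement vector. (Version with ordered starting points.) -/
lemma same_vec_le {d a b : ℕ} (hd : 1 ≤ d) (ha : 1 ≤ a) {i j i' j' : ℕ}
    (h1 : IsArc (H9 d) a b (i, j)) (h2 : IsArc (H9 d) a b (i', j'))
    (hnode : H9 d i = H9 d i') (hk : ¬ (i - 1) % d = 0) (hle : i ≤ i') :
    impVec (Adj9 d) (fun _ => 1) (H9 d) a (i, j)
      = impVec (Adj9 d) (fun _ => 1) (H9 d) a (i', j') := by
  have hd0 : 0 < d := hd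
  have hai : a ≤ i := h1.1
  have hai' : a ≤ i' := h2.1
  have hi1 : 1 ≤ i := le_trans ha hai
  have hi'1 : 1 ≤ i' := le_trans ha hai'
  set k := (i - 1) % d + 1 with hkdef
  have hk2 : 2 ≤ k := by omega
  have hkd : k ≤ d := by have := Nat.mod_lt (i - 1) hd0; omega
  have hfst' : (i' - 1) % d = (i - 1) % d := by
    have h := congrArg Prod.fst hnode.symm
    have h' : (i' - 1) % d + 1 = (i - 1) % d + 1 := h
    omega
  set N := Nsize d k with hNdef
  have hN0 : 0 < N := Nsize_pos _ _
  set M := N * d with hMdef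
  have hM0 : 0 < M := Nat.mul_pos hN0 hd0
  have harc1 : j = i + M := arc_eq hd ha h1
  have harc2 : j' = i' + M := by
    have h := arc_eq hd ha h2
    rwa [hfst'] at h
  have hmod : i' % M = i % M := (H9_eq_iff hd hi1 hi'1).mp hnode.symm
  have hdvd : M ∣ i' - i := (Nat.modEq_iff_dvd' hle).mp hmod.symm
  obtain ⟨t, ht⟩ := hdvd
  have hi' : i' = i + t * M := by
    have hc : t * M = M * t := Nat.mul_comm _ _
    omega
  have hsplitM : M = 3 ^ (k - 1) * (Nsize d 1 * d) := by
    rw [hMdef, hNdef, Nsize_split (show 1 ≤ k by omega)]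
    ring
  have hvu : validNode d (H9 d i) := validNode_H9 hd i
  have hu1 : (H9 d i).1 = k := rfl
  -- all valid layer-1 nodes appear an odd number of times inside each of the two arcs
  have hodd : ∀ (i₀ : ℕ), 1 ≤ i₀ → (i₀ - 1) % d = (i - 1) % d →
      ∀ v : ℕ × ℕ, validNode d v → v.1 = 1 → oddIn (H9 d) i₀ (i₀ + M) v := by
    intro i₀ hi₀ hoff v hv hv1
    have hne : ¬ (H9 d i₀ = v) := by
      intro hcontra
      have hfst0 : (i₀ - 1) % d + 1 = v.1 := congrArg Prod.fst hcontra
      rw [hv1] at hfst0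
      omega
    have hM' : i₀ + M = i₀ + 3 ^ (k - 1) * (Nsize d v.1 * d) := by rw [hv1, hsplitM]
    rw [oddIn_iff, hM', occ_Ioo hd hv hi₀ hne (3 ^ (k - 1))]
    exact Odd.pow (by decide)
  -- the two relevant configuration signs are multiplied by the same factor
  have hconf : ∀ v : ℕ × ℕ, validNode d v → v.1 = 1 →
      conf (fun _ => (1:ℝ)) (H9 d) a (i' - 1) (H9 d i) * conf (fun _ => (1:ℝ)) (H9 d) a (i' - 1) v
        = conf (fun _ => (1:ℝ)) (H9 d) a (i - 1) (H9 d i) * conf (fun _ => (1:ℝ)) (H9 d) a (i - 1) v := by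
    intro v hv hv1
    have hcu : conf (fun _ => (1:ℝ)) (H9 d) a (i' - 1) (H9 d i)
        = conf (fun _ => (1:ℝ)) (H9 d) a (i - 1) (H9 d i) * (-1) ^ t := by
      rw [conf_shift ha hai hle (H9 d i)]
      congr 1
      have hIco : Finset.Ico i i' = Finset.Ico i (i + t * (Nsize d (H9 d i).1 * d)) := by
        rw [hu1, ← hMdef, ← hi']
      rw [hIco, occ_count hd hvu hi1 t]
    have hcv : conf (fun _ => (1:ℝ)) (H9 d) a (i' - 1) v
        = conf (fun _ => (1:ℝ)) (H9 d) a (i - 1) v * (-1) ^ (t * 3 ^ (k - 1)) := by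
      rw [conf_shift ha hai hle v]
      congr 1
      have harith : t * M = (t * 3 ^ (k - 1)) * (Nsize d v.1 * d) := by
        rw [hv1, hsplitM]; ring
      have hIco : Finset.Ico i i' = Finset.Ico i (i + (t * 3 ^ (k - 1)) * (Nsize d v.1 * d)) := by
        rw [← harith, ← hi']
      rw [hIco, occ_count hd hv hi1 _]
    rw [hcu, hcv]
    have heven : (-1 : ℝ) ^ t * (-1) ^ (t * 3 ^ (k - 1)) = 1 := by
      rw [← pow_add]
      apply Even.neg_one_pow
      obtain ⟨m, hm⟩ : Odd (3 ^ (k - 1)) := Odd.pow (by decide)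
      refine ⟨t * m + t, ?_⟩
      rw [hm]; ring
    calc conf (fun _ => (1:ℝ)) (H9 d) a (i - 1) (H9 d i) * (-1) ^ t *
          (conf (fun _ => (1:ℝ)) (H9 d) a (i - 1) v * (-1) ^ (t * 3 ^ (k - 1)))
        = conf (fun _ => (1:ℝ)) (H9 d) a (i - 1) (H9 d i) * conf (fun _ => (1:ℝ)) (H9 d) a (i - 1) v *
            ((-1) ^ t * (-1) ^ (t * 3 ^ (k - 1))) := by ring
      _ = conf (fun _ => (1:ℝ)) (H9 d) a (i - 1) (H9 d i) * conf (fun _ => (1:ℝ)) (H9 d) a (i - 1) v := by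
          rw [heven, mul_one]
  -- now compare the improvement vectors entrywise
  funext p
  simp only [impVec]
  have hlayer1 : ∀ q : ℕ × ℕ, q = H9 d i → Adj9 d p.1 p.2 → (q = p.1 → p.2.1 = 1) ∧ (q = p.2 → p.1.1 = 1) := by
    intro q hq hadj
    constructor
    · intro hqp
      rcases hadj.2.2 with ⟨ha1, _⟩ | ⟨hb1, _⟩
      · exfalso
        have hx : (H9 d i).1 = 1 := by rw [← hq, hqp]; exact ha1
        have hx' : (i - 1) % d + 1 = 1 := hx
        omega
      · exact hb1
    · intro hqp
      rcases hadj.2.2 with ⟨ha1, _⟩ | ⟨hb1, _⟩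
      · exact ha1
      · exfalso
        have hx : (H9 d i).1 = 1 := by rw [← hq, hqp]; exact hb1
        have hx' : (i - 1) % d + 1 = 1 := hx
        omega
  have hoff : (i - 1) % d = (i - 1) % d := rfl
  have hCiff : ((p.1 = H9 d i ∧ Adj9 d p.1 p.2 ∧ oddIn (H9 d) i j p.2) ∨
        (p.2 = H9 d i ∧ Adj9 d p.1 p.2 ∧ oddIn (H9 d) i j p.1)) ↔
      ((p.1 = H9 d i' ∧ Adj9 d p.1 p.2 ∧ oddIn (H9 d) i' j' p.2) ∨
        (p.2 = H9 d i' ∧ Adj9 d p.1 p.2 ∧ oddIn (H9 d) i' j' p.1)) := by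
    constructor
    · rintro (⟨hp, hadj, _⟩ | ⟨hp, hadj, _⟩)
      · left
        refine ⟨hnode ▸ hp, hadj, ?_⟩
        rw [harc2]
        exact hodd i' hi'1 hfst' p.2 hadj.2.1 ((hlayer1 (H9 d i) rfl hadj).1 hp.symm)
      · right
        refine ⟨hnode ▸ hp, hadj, ?_⟩
        rw [harc2]
        exact hodd i' hi'1 hfst' p.1 hadj.1 ((hlayer1 (H9 d i) rfl hadj).2 hp.symm)
    · rintro (⟨hp, hadj, _⟩ | ⟨hp, hadj, _⟩)
      · left
        have hp' : p.1 = H9 d i := by rw [hp, ← hnode]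
        refine ⟨hp', hadj, ?_⟩
        rw [harc1]
        exact hodd i hi1 hoff p.2 hadj.2.1 ((hlayer1 (H9 d i) rfl hadj).1 hp'.symm)
      · right
        have hp' : p.2 = H9 d i := by rw [hp, ← hnode]
        refine ⟨hp', hadj, ?_⟩
        rw [harc1]
        exact hodd i hi1 hoff p.1 hadj.1 ((hlayer1 (H9 d i) rfl hadj).2 hp'.symm)
  by_cases hC : (p.1 = H9 d i ∧ Adj9 d p.1 p.2 ∧ oddIn (H9 d) i j p.2) ∨
      (p.2 = H9 d i ∧ Adj9 d p.1 p.2 ∧ oddIn (H9 d) i j p.1)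
  · rw [if_pos hC, if_pos (hCiff.mp hC)]
    rcases hC with ⟨hp, hadj, _⟩ | ⟨hp, hadj, _⟩
    · have hp2 : p.2.1 = 1 := (hlayer1 (H9 d i) rfl hadj).1 hp.symm
      have hcc := hconf p.2 hadj.2.1 hp2
      rw [hp]
      calc 2 * conf (fun _ => (1:ℝ)) (H9 d) a (i - 1) (H9 d i) * conf (fun _ => (1:ℝ)) (H9 d) a (i - 1) p.2
          = 2 * (conf (fun _ => (1:ℝ)) (H9 d) a (i - 1) (H9 d i) * conf (fun _ => (1:ℝ)) (H9 d) a (i - 1) p.2) := by ring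
        _ = 2 * (conf (fun _ => (1:ℝ)) (H9 d) a (i' - 1) (H9 d i) * conf (fun _ => (1:ℝ)) (H9 d) a (i' - 1) p.2) := by rw [hcc]
        _ = 2 * conf (fun _ => (1:ℝ)) (H9 d) a (i' - 1) (H9 d i) * conf (fun _ => (1:ℝ)) (H9 d) a (i' - 1) p.2 := by ring
    · have hp1 : p.1.1 = 1 := (hlayer1 (H9 d i) rfl hadj).2 hp.symm
      have hcc := hconf p.1 hadj.1 hp1
      rw [hp]
      calc 2 * conf (fun _ => (1:ℝ)) (H9 d) a (i - 1) p.1 * conf (fun _ => (1:ℝ)) (H9 d) a (i - 1) (H9 d i)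
          = 2 * (conf (fun _ => (1:ℝ)) (H9 d) a (i - 1) (H9 d i) * conf (fun _ => (1:ℝ)) (H9 d) a (i - 1) p.1) := by ring
        _ = 2 * (conf (fun _ => (1:ℝ)) (H9 d) a (i' - 1) (H9 d i) * conf (fun _ => (1:ℝ)) (H9 d) a (i' - 1) p.1) := by rw [hcc]
        _ = 2 * conf (fun _ => (1:ℝ)) (H9 d) a (i' - 1) p.1 * conf (fun _ => (1:ℝ)) (H9 d) a (i' - 1) (H9 d i) := by ring
  · rw [if_neg hC, if_neg (fun h => hC (hCiff.mpr h))]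


/-- The main counting bound: `2·d·rank(S) ≤ 5·len(S)`. -/
lemma main_bound {d a b : ℕ} (hd : 1 ≤ d) (ha : 1 ≤ a) (hab : a ≤ b) :
    2 * (d * subRank d a b) ≤ 5 * (b - a) := by
  classical
  have hd0 : 0 < d := hd
  set f := impVec (Adj9 d) (fun _ => (1:ℝ)) (H9 d) a with hf
  set s : Finset (ℕ × ℕ) :=
    (Finset.Icc a b ×ˢ Finset.Icc a b).filter (fun α => IsArc (H9 d) a b α) with hs
  have hmem : ∀ α, α ∈ s ↔ IsArc (H9 d) a b α := by
    intro α
    rw [hs, Finset.mem_filter, Finset.mem_product, Finset.mem_Icc, Finset.mem_Icc]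
    constructor
    · exact fun h => h.2
    · intro h
      have h1 := h.1
      have h2 := h.2.1
      have h3 := h.2.2.1
      exact ⟨⟨⟨h1, by omega⟩, by omega, h3⟩, h⟩
  have hset : {α : ℕ × ℕ | IsArc (H9 d) a b α} = ↑s := by
    ext α
    rw [Set.mem_setOf_eq, Finset.mem_coe, hmem]
  have hr1 : subRank d a b ≤ (s.image f).card := by
    have he : subRank d a b
        = Module.finrank ℝ (Submodule.span ℝ
            ((s.image f : Finset ((ℕ × ℕ) × (ℕ × ℕ) → ℝ)) : Set ((ℕ × ℕ) × (ℕ × ℕ) → ℝ))) := by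
      unfold subRank
      rw [hset, ← hf, ← Finset.coe_image]
    rw [he]
    exact finrank_span_finset_le_card _
  set s1 := s.filter (fun α => (α.1 - 1) % d = 0) with hs1
  set s2 := s.filter (fun α => ¬ (α.1 - 1) % d = 0) with hs2
  have himg : (s.image f).card ≤ s1.card + (s2.image f).card := by
    have hsplit : s = s1 ∪ s2 := by
      rw [hs1, hs2, Finset.filter_union_filter_not_eq]
    calc (s.image f).card = ((s1 ∪ s2).image f).card := by rw [← hsplit]
      _ = (s1.image f ∪ s2.image f).card := by rw [Finset.image_union]
      _ ≤ (s1.image f).card + (s2.image f).card := Finset.card_union_le _ _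
      _ ≤ s1.card + (s2.image f).card := add_le_add_left Finset.card_image_le _
  -- layer-1 arcs : at most one per admissible right endpoint
  have hb1 : d * s1.card ≤ b - a := by
    rcases le_or_gt (a + Nsize d 1 * d) b with hcase | hcase
    · have hinj : s1.card = (s1.image Prod.snd).card := by
        rw [Finset.card_image_of_injOn]
        intro α hα α' hα' he
        rw [Finset.mem_coe, hs1, Finset.mem_filter] at hα hα'
        exact arc_right_unique ((hmem α).mp hα.1) ((hmem α').mp hα'.1) he
      have hsubT : s1.image Prod.snd ⊆
          (Finset.Icc (a + Nsize d 1 * d) b).filter (fun x => x % d = 1 % d) := by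
        intro x hx
        rw [Finset.mem_image] at hx
        obtain ⟨α, hα, rfl⟩ := hx
        rw [hs1, Finset.mem_filter] at hα
        obtain ⟨hαs, hα0⟩ := hα
        have harc : IsArc (H9 d) a b α := (hmem α).mp hαs
        have harc' : IsArc (H9 d) a b (α.1, α.2) := by rw [Prod.mk.eta]; exact harc
        have heq2' := arc_eq hd ha harc'
        have heq2 : α.2 = α.1 + Nsize d 1 * d := by
          rwa [hα0] at heq2'
        rw [Finset.mem_filter, Finset.mem_Icc]
        refine ⟨⟨?_, harc.2.2.1⟩, ?_⟩
        · rw [heq2]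
          exact Nat.add_le_add_right harc.1 _
        · rw [heq2, Nat.add_mul_mod_self_right]
          have h1 : 1 ≤ α.1 := le_trans ha harc.1
          obtain ⟨q, hq⟩ : d ∣ (α.1 - 1) := Nat.dvd_of_mod_eq_zero hα0
          have hα1 : α.1 = 1 + q * d := by
            have : q * d = d * q := Nat.mul_comm _ _
            omega
          rw [hα1, Nat.add_mul_mod_self_right]
      have hcount := count_le (show 1 % d < d from Nat.mod_lt 1 hd0)
        (a + Nsize d 1 * d) b
      have hstep : s1.card ≤ (b - (a + Nsize d 1 * d)) / d + 1 := by
        rw [hinj]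
        exact le_trans (Finset.card_le_card hsubT) hcount
      have hdd : d ≤ Nsize d 1 * d := Nat.le_mul_of_pos_left d (Nsize_pos d 1)
      have hdivmul : (b - (a + Nsize d 1 * d)) / d * d ≤ b - (a + Nsize d 1 * d) :=
        Nat.div_mul_le_self _ _
      calc d * s1.card ≤ d * ((b - (a + Nsize d 1 * d)) / d + 1) :=
            Nat.mul_le_mul_left _ hstep
        _ = (b - (a + Nsize d 1 * d)) / d * d + d := by ring
        _ ≤ b - a := by omega
    · have hempty : s1 = ∅ := by
        rw [Finset.eq_empty_iff_forall_notMem]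
        intro α hα
        rw [hs1, Finset.mem_filter] at hα
        have harc := (hmem α).mp hα.1
        have harc' : IsArc (H9 d) a b (α.1, α.2) := by rw [Prod.mk.eta]; exact harc
        have heq2' := arc_eq hd ha harc'
        have heq2 : α.2 = α.1 + Nsize d 1 * d := by
          rwa [hα.2] at heq2'
        have h3 := harc.2.2.1
        have h1 := harc.1
        omega
      rw [hempty]
      simp
  -- higher-layer arcs : improvement vectors only depend on the node
  have hb2 : 2 * (d * (s2.image f).card) ≤ 3 * (b - a) := by
    have hfac : ∀ x ∈ s2, ∀ y ∈ s2,
        (fun α => H9 d α.1) x = (fun α => H9 d α.1) y → f x = f y := by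
      intro x hx y hy hxy
      rw [hs2, Finset.mem_filter] at hx hy
      have hax : IsArc (H9 d) a b (x.1, x.2) := by rw [Prod.mk.eta]; exact (hmem x).mp hx.1
      have hay : IsArc (H9 d) a b (y.1, y.2) := by rw [Prod.mk.eta]; exact (hmem y).mp hy.1
      have hxy' : H9 d x.1 = H9 d y.1 := hxy
      rcases le_total x.1 y.1 with h | h
      · calc f x = impVec (Adj9 d) (fun _ => (1:ℝ)) (H9 d) a (x.1, x.2) := by
              rw [hf, Prod.mk.eta]
          _ = impVec (Adj9 d) (fun _ => (1:ℝ)) (H9 d) a (y.1, y.2) :=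
              same_vec_le hd ha hax hay hxy' hx.2 h
          _ = f y := by rw [hf, Prod.mk.eta]
      · calc f x = impVec (Adj9 d) (fun _ => (1:ℝ)) (H9 d) a (x.1, x.2) := by
              rw [hf, Prod.mk.eta]
          _ = impVec (Adj9 d) (fun _ => (1:ℝ)) (H9 d) a (y.1, y.2) :=
              (same_vec_le hd ha hay hax hxy'.symm hy.2 h).symm
          _ = f y := by rw [hf, Prod.mk.eta]
    have himg2 : (s2.image f).card ≤ (s2.image (fun α => H9 d α.1)).card :=
      card_image_le_of_eq _ _ _ hfac
    set F := (Finset.Icc 2 d).filter (fun k => Nsize d k * d ≤ b - a) with hF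
    have hsubT2 : s2.image (fun α => H9 d α.1) ⊆
        F.biUnion (fun k => {k} ×ˢ Finset.range (Nsize d k)) := by
      intro x hx
      rw [Finset.mem_image] at hx
      obtain ⟨α, hα, rfl⟩ := hx
      rw [hs2, Finset.mem_filter] at hα
      have harc := (hmem α).mp hα.1
      have harc' : IsArc (H9 d) a b (α.1, α.2) := by rw [Prod.mk.eta]; exact harc
      have heq2 := arc_eq hd ha harc'
      have h1 : 1 ≤ α.1 := le_trans ha harc.1
      have hk2 : 2 ≤ (α.1 - 1) % d + 1 := by
        have := hα.2
        omega
      have hkd' : (α.1 - 1) % d + 1 ≤ d := by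
        have := Nat.mod_lt (α.1 - 1) hd0
        omega
      rw [Finset.mem_biUnion]
      refine ⟨(α.1 - 1) % d + 1, ?_, ?_⟩
      · rw [hF, Finset.mem_filter, Finset.mem_Icc]
        refine ⟨⟨hk2, hkd'⟩, ?_⟩
        have hb' := harc.2.2.1
        have ha' := harc.1
        omega
      · rw [Finset.mem_product, Finset.mem_singleton, Finset.mem_range]
        exact ⟨rfl, Nat.mod_lt _ (Nsize_pos _ _)⟩
    have hcardT2 : (F.biUnion (fun k => {k} ×ˢ Finset.range (Nsize d k))).card
        ≤ ∑ k ∈ F, Nsize d k := by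
      refine le_trans Finset.card_biUnion_le (le_of_eq (Finset.sum_congr rfl fun k _ => ?_))
      rw [Finset.card_product, Finset.card_singleton, Finset.card_range, one_mul]
    have hsumF : 2 * (d * ∑ k ∈ F, Nsize d k) ≤ 3 * (b - a) := by
      rcases F.eq_empty_or_nonempty with hFe | hFne
      · rw [hFe]
        simp
      · set K := F.max' hFne with hK
        have hKF : K ∈ F := F.max'_mem hFne
        rw [hF, Finset.mem_filter, Finset.mem_Icc] at hKF
        obtain ⟨⟨hK2, hKd⟩, hKle⟩ := hKF
        have hstep1 : ∑ k ∈ F, Nsize d k = ∑ j ∈ F.image (fun k => d + k - 1), 3 ^ j := by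
          rw [Finset.sum_image ?_]
          · exact Finset.sum_congr rfl fun k _ => rfl
          · intro x hx y hy hxy
            simp only [Finset.mem_coe, hF, Finset.mem_filter, Finset.mem_Icc] at hx hy hxy
            omega
        have hstep2 : F.image (fun k => d + k - 1) ⊆ Finset.range (d + K) := by
          intro j hj
          rw [Finset.mem_image] at hj
          obtain ⟨k, hkF, rfl⟩ := hj
          rw [Finset.mem_range]
          have hkK : k ≤ K := Finset.le_max' F k hkF
          rw [hF, Finset.mem_filter, Finset.mem_Icc] at hkF
          omega
        have hstep3 : ∑ j ∈ F.image (fun k => d + k - 1), 3 ^ j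
            ≤ ∑ j ∈ Finset.range (d + K), 3 ^ j :=
          Finset.sum_le_sum_of_subset hstep2
        have hgeom : ∀ n : ℕ, 2 * ∑ j ∈ Finset.range n, 3 ^ j + 1 = 3 ^ n := by
          intro n
          induction n with
          | zero => simp
          | succ m ih =>
            rw [Finset.sum_range_succ]
            have h3 : (3:ℕ) ^ (m + 1) = 3 ^ m * 3 := pow_succ 3 m
            omega
        have h2S : 2 * ∑ k ∈ F, Nsize d k ≤ 3 * Nsize d K := by
          have hg := hgeom (d + K)
          have hpow : (3:ℕ) ^ (d + K) = 3 ^ (d + K - 1) * 3 := by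
            rw [← pow_succ]
            congr 1
            omega
          have hNK : Nsize d K = 3 ^ (d + K - 1) := rfl
          have h4 : 2 * ∑ j ∈ F.image (fun k => d + k - 1), 3 ^ j
              ≤ 2 * ∑ j ∈ Finset.range (d + K), 3 ^ j := Nat.mul_le_mul_left _ hstep3
          rw [hstep1, hNK]
          omega
        calc 2 * (d * ∑ k ∈ F, Nsize d k) = d * (2 * ∑ k ∈ F, Nsize d k) := by ring
          _ ≤ d * (3 * Nsize d K) := Nat.mul_le_mul_left _ h2S
          _ = 3 * (Nsize d K * d) := by ring
          _ ≤ 3 * (b - a) := Nat.mul_le_mul_left _ hKle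
    have hchain : (s2.image f).card ≤ ∑ k ∈ F, Nsize d k :=
      le_trans himg2 (le_trans (Finset.card_le_card hsubT2) hcardT2)
    calc 2 * (d * (s2.image f).card) ≤ 2 * (d * ∑ k ∈ F, Nsize d k) :=
          Nat.mul_le_mul_left _ (Nat.mul_le_mul_left _ hchain)
      _ ≤ 3 * (b - a) := hsumF
  calc 2 * (d * subRank d a b) ≤ 2 * (d * (s1.card + (s2.image f).card)) :=
        Nat.mul_le_mul_left _ (Nat.mul_le_mul_left _ (le_trans hr1 himg))
    _ = 2 * (d * s1.card) + 2 * (d * (s2.image f).card) := by ring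
    _ ≤ 2 * (b - a) + 3 * (b - a) := add_le_add (Nat.mul_le_mul_left _ hb1) hb2
    _ = 5 * (b - a) := by ring

end AuxLemmas

/-- **Appendix B.** In the construction above (with `n = 3^(10d)`), every substring `S`
of `H` satisfies `rank(S)/len(S) = O(1/log n)`, i.e. there is an absolute constant
`c > 0` such that `rank(S) · log n ≤ c · len(S)` for all `d` and all substrings. -/
theorem stmt_9 :
    ∃ c : ℝ, 0 < c ∧ ∀ d : ℕ, 1 ≤ d → ∀ a b : ℕ,
      1 ≤ a → a ≤ b → b ≤ numBlocks d * d →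
      (subRank d a b : ℝ) * Real.log ((3 : ℝ) ^ (10 * d)) ≤ c * ((b - a + 1 : ℕ) : ℝ) := by
  refine ⟨50, by norm_num, ?_⟩
  intro d hd a b ha hab _hb
  have key := main_bound hd ha hab
  have hlog3 : Real.log 3 ≤ 2 := by
    rw [Real.log_le_iff_le_exp (by norm_num : (0:ℝ) < 3)]
    have h1 : (2:ℝ) ≤ Real.exp 1 := by
      have := Real.add_one_le_exp (1:ℝ)
      linarith
    have h2 : Real.exp 2 = Real.exp 1 * Real.exp 1 := by
      rw [← Real.exp_add]
      norm_num
    nlinarith [Real.exp_pos (1:ℝ)]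
  have hlog_nonneg : (0:ℝ) ≤ Real.log 3 := Real.log_nonneg (by norm_num)
  have key' : ((2 * (d * subRank d a b) : ℕ) : ℝ) ≤ ((5 * (b - a) : ℕ) : ℝ) :=
    Nat.cast_le.mpr key
  push_cast [Nat.cast_sub hab] at key'
  rw [Real.log_pow]
  have hdr : (0:ℝ) ≤ (subRank d a b : ℝ) * (10 * (d:ℝ)) := by positivity
  calc (subRank d a b : ℝ) * ((10 * d : ℕ) * Real.log 3)
      = ((subRank d a b : ℝ) * (10 * (d:ℝ))) * Real.log 3 := by push_cast; ring
    _ ≤ ((subRank d a b : ℝ) * (10 * (d:ℝ))) * 2 := by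
        exact mul_le_mul_of_nonneg_left hlog3 hdr
    _ = 10 * ((2:ℝ) * ((d:ℝ) * (subRank d a b : ℝ))) := by ring
    _ ≤ 10 * (5 * ((b:ℝ) - (a:ℝ))) := by
        have h10 : (0:ℝ) < 10 := by norm_num
        apply mul_le_mul_of_nonneg_left _ (le_of_lt h10)
        linarith
    _ ≤ 50 * (((b - a + 1 : ℕ)) : ℝ) := by
        push_cast [Nat.cast_sub hab]
        linarith
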